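/- The number of standard Young tableaux of rectangular shape (n,n,n) equals 2·(3n)! / (n!·(n+1)!·(n+2)!). -/

import Mathlib

/-- A standard Young tableau of rectangular shape `(n,n,n)`, encoded (0-indexed) as a
filling `T : Fin 3 → Fin n → Fin (3*n)` that is strictly increasing along rows and
columns and bijective. -/
def IsSYT3 (n : ℕ) (T : Fin 3 → Fin n → Fin (3*n)) : Prop :=
  (∀ i : Fin 3, ∀ j k : Fin n, j < k → T i j < T i k) ∧
  (∀ j : Fin n, ∀ i k : Fin 3, i < k → T i j < T k j) ∧
  Function.Bijective (fun p : Fin 3 × Fin n => T p.1 p.2)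

namespace SYT3Aux

def fc : ℕ → ℕ → ℕ → ℕ
  | a, b, c =>
    if c ≤ b ∧ b ≤ a then
      if a = 0 then 1
      else
        (if _h : 0 < a then fc (a-1) b c else 0) +
        (if _h : 0 < b then fc a (b-1) c else 0) +
        (if _h : 0 < c then fc a b (c-1) else 0)
    else 0
termination_by a b c => a + b + c
decreasing_by all_goals omega

lemma fc_invalid {a b c : ℕ} (h : ¬(c ≤ b ∧ b ≤ a)) : fc a b c = 0 := by
  rw [fc]; simp [h]

lemma fc_zero : fc 0 0 0 = 1 := by rw [fc]; simp

lemma fc_rec {a b c : ℕ} (hcb : c ≤ b) (hba : b ≤ a) (ha : a ≠ 0) :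
    fc a b c = (if 0 < a then fc (a-1) b c else 0) +
      (if 0 < b then fc a (b-1) c else 0) +
      (if 0 < c then fc a b (c-1) else 0) := by
  conv_lhs => rw [fc]
  simp [hcb, hba, ha]

end SYT3Aux
namespace SYT3Aux

/-- closed-form value, as a rational -/
noncomputable def Fq (a b c : ℕ) : ℚ :=
  (a+b+c).factorial * (((a:ℚ)+1-b) * (((b:ℚ)+1-c) * ((a:ℚ)+2-c))) /
    ((a+2).factorial * ((b+1).factorial * c.factorial))

lemma fc_a00 (a : ℕ) : fc a 0 0 = 1 := by
  induction a with
  | zero => exact fc_zero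
  | succ n ih => rw [fc_rec (by omega) (by omega) (by omega)]; simpa using ih

lemma Fq_a00 (a : ℕ) : Fq a 0 0 = 1 := by
  unfold Fq
  have h2 : ((a+2).factorial : ℚ) = (a+2) * ((a+1) * a.factorial) := by
    push_cast [Nat.factorial_succ (a+1), Nat.factorial_succ a]; ring
  rw [h2]
  have ha : (a.factorial : ℚ) ≠ 0 := by positivity
  simp only [Nat.add_zero, Nat.factorial_one, Nat.factorial_zero]
  field_simp
  ring

end SYT3Aux
namespace SYT3Aux

lemma fc_eq_Fq : ∀ N a b c, a+b+c = N → c ≤ b → b ≤ a → (fc a b c : ℚ) = Fq a b c := by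
  intro N
  induction N using Nat.strong_induction_on with
  | _ N ih =>
  intro a b c hN hcb hba
  rcases Nat.eq_zero_or_pos b with hb | hb
  · have hc : c = 0 := by omega
    subst hb hc
    rw [fc_a00, Fq_a00, Nat.cast_one]
  have ha : 0 < a := lt_of_lt_of_le hb hba
  rcases Nat.eq_zero_or_pos c with hc | hc
  · -- c = 0, two-term recurrence
    subst hc
    obtain ⟨a', rfl⟩ : ∃ a', a = a'+1 := ⟨a-1, by omega⟩
    obtain ⟨b', rfl⟩ : ∃ b', b = b'+1 := ⟨b-1, by omega⟩
    rw [fc_rec hcb hba (by omega)]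
    simp only [ha, hb, if_pos, Nat.lt_irrefl, if_neg, Nat.add_sub_cancel, Nat.add_zero,
      lt_self_iff_false, Nat.cast_add, Nat.cast_zero, add_zero]
    have e2 : (fc (a'+1) b' 0 : ℚ) = Fq (a'+1) b' 0 :=
      ih (N-1) (by omega) _ _ _ (by omega) (by omega) (by omega)
    have e1 : (fc a' (b'+1) 0 : ℚ) = Fq a' (b'+1) 0 := by
      by_cases hba' : b'+1 ≤ a'
      · exact ih (N-1) (by omega) _ _ _ (by omega) (by omega) hba'
      · have hz : fc a' (b'+1) 0 = 0 := fc_invalid (by omega)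
        have hab : a' = b' := by omega
        rw [hz, Nat.cast_zero]
        unfold Fq
        rw [hab]
        push_cast
        rw [show (b':ℚ) + 1 - (b'+1) = 0 by ring]
        simp
    rw [e1, e2]
    unfold Fq
    have k1 : a' + (b'+1) + 0 = (a'+b') + 1 := by omega
    have k2 : (a'+1) + b' + 0 = (a'+b') + 1 := by omega
    have k3 : (a'+1) + (b'+1) + 0 = ((a'+b')+1) + 1 := by omega
    rw [k1, k2, k3, Nat.factorial_succ (a'+b'+1), Nat.factorial_succ (a'+2),
      Nat.factorial_succ (b'+1)]
    have n1 : ((a'+2).factorial : ℚ) ≠ 0 := by positivity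
    have n2 : ((b'+1).factorial : ℚ) ≠ 0 := by positivity
    have n3 : ((a'+b'+1).factorial : ℚ) ≠ 0 := by positivity
    have n4 : ((0:ℕ).factorial : ℚ) ≠ 0 := by positivity
    push_cast
    field_simp
    ring
  · -- c > 0, three-term recurrence
    obtain ⟨a', rfl⟩ : ∃ a', a = a'+1 := ⟨a-1, by omega⟩
    obtain ⟨b', rfl⟩ : ∃ b', b = b'+1 := ⟨b-1, by omega⟩
    obtain ⟨c', rfl⟩ : ∃ c', c = c'+1 := ⟨c-1, by omega⟩
    rw [fc_rec hcb hba (by omega)]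
    simp only [ha, hb, hc, if_pos, Nat.add_sub_cancel]
    have e3 : (fc (a'+1) (b'+1) c' : ℚ) = Fq (a'+1) (b'+1) c' :=
      ih (N-1) (by omega) _ _ _ (by omega) (by omega) (by omega)
    have e2 : (fc (a'+1) b' (c'+1) : ℚ) = Fq (a'+1) b' (c'+1) := by
      by_cases h' : c'+1 ≤ b'
      · exact ih (N-1) (by omega) _ _ _ (by omega) h' (by omega)
      · have hz : fc (a'+1) b' (c'+1) = 0 := fc_invalid (by omega)
        have hbc : b' = c' := by omega
        rw [hz, Nat.cast_zero]
        unfold Fq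
        rw [hbc]
        push_cast
        rw [show (c':ℚ) + 1 - (c'+1) = 0 by ring]
        simp
    have e1 : (fc a' (b'+1) (c'+1) : ℚ) = Fq a' (b'+1) (c'+1) := by
      by_cases h' : b'+1 ≤ a'
      · exact ih (N-1) (by omega) _ _ _ (by omega) (by omega) h'
      · have hz : fc a' (b'+1) (c'+1) = 0 := fc_invalid (by omega)
        have hab : a' = b' := by omega
        rw [hz, Nat.cast_zero]
        unfold Fq
        rw [hab]
        push_cast
        rw [show (b':ℚ) + 1 - (b'+1) = 0 by ring]
        simp
    rw [Nat.cast_add, Nat.cast_add, e1, e2, e3]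
    unfold Fq
    have k1 : a' + (b'+1) + (c'+1) = (a'+b'+c'+1) + 1 := by omega
    have k2 : (a'+1) + b' + (c'+1) = (a'+b'+c'+1) + 1 := by omega
    have k3 : (a'+1) + (b'+1) + c' = (a'+b'+c'+1) + 1 := by omega
    have k4 : (a'+1) + (b'+1) + (c'+1) = ((a'+b'+c'+1)+1) + 1 := by omega
    rw [k1, k2, k3, k4, Nat.factorial_succ ((a'+b'+c'+1)+1), Nat.factorial_succ (a'+2),
      Nat.factorial_succ (b'+1), Nat.factorial_succ c']
    have n1 : ((a'+2).factorial : ℚ) ≠ 0 := by positivity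
    have n2 : ((b'+1).factorial : ℚ) ≠ 0 := by positivity
    have n3 : ((c'+1).factorial : ℚ) ≠ 0 := by positivity
    have n4 : (c'.factorial : ℚ) ≠ 0 := by positivity
    have n5 : (((a'+b'+c'+1)+1).factorial : ℚ) ≠ 0 := by positivity
    push_cast
    field_simp
    ring

end SYT3Aux
namespace SYT3Aux

lemma fc_nnn (n : ℕ) :
    fc n n n * (n.factorial * (n+1).factorial * (n+2).factorial) = 2 * (3*n).factorial := by
  have h := fc_eq_Fq (n+n+n) n n n rfl le_rfl le_rfl
  unfold Fq at h
  rw [show ((n:ℚ)+1-n) = 1 by ring, show ((n:ℚ)+2-n) = 2 by ring,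
    show n+n+n = 3*n by ring] at h
  have hD : ((n+2).factorial : ℚ) * ((n+1).factorial * n.factorial) ≠ 0 := by positivity
  rw [eq_div_iff hD] at h
  have : ((fc n n n * (n.factorial * (n+1).factorial * (n+2).factorial) : ℕ) : ℚ)
      = ((2 * (3*n).factorial : ℕ) : ℚ) := by
    push_cast
    linear_combination h
  exact_mod_cast this

lemma fc_eq_div (n : ℕ) :
    fc n n n = 2 * (3*n).factorial / (n.factorial * (n+1).factorial * (n+2).factorial) := by
  have hK : 0 < n.factorial * (n+1).factorial * (n+2).factorial := by positivity
  exact (Nat.div_eq_of_eq_mul_left hK (fc_nnn n).symm).symm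

end SYT3Aux
namespace SYT3Aux

/-- reversed ballot words: head of the list is the LAST letter of the word -/
def BB : ℕ → ℕ → ℕ → Finset (List (Fin 3))
  | a, b, c =>
    if c ≤ b ∧ b ≤ a then
      if a = 0 then {[]}
      else
        (if _h : 0 < a then (BB (a-1) b c).image (List.cons 0) else ∅) ∪
        (if _h : 0 < b then (BB a (b-1) c).image (List.cons 1) else ∅) ∪
        (if _h : 0 < c then (BB a b (c-1)).image (List.cons 2) else ∅)
    else ∅
termination_by a b c => a + b + c
decreasing_by all_goals omega

lemma disj_cons {x y : Fin 3} (h : x ≠ y) (s t : Finset (List (Fin 3))) :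
    Disjoint (s.image (List.cons x)) (t.image (List.cons y)) := by
  rw [Finset.disjoint_left]
  rintro l hl hl'
  simp only [Finset.mem_image] at hl hl'
  obtain ⟨u, -, rfl⟩ := hl
  obtain ⟨v, -, hv⟩ := hl'
  injection hv with h1 _
  exact h h1.symm

lemma BB_card : ∀ N a b c, a + b + c = N → (BB a b c).card = fc a b c := by
  intro N
  induction N using Nat.strong_induction_on with
  | _ N ih =>
  intro a b c hN
  rw [BB, fc]
  by_cases hv : c ≤ b ∧ b ≤ a
  · rw [if_pos hv, if_pos hv]
    by_cases haz : a = 0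
    · simp [haz]
    · rw [if_neg haz, if_neg haz]
      have hd1 : Disjoint
          (if _h : 0 < a then (BB (a-1) b c).image (List.cons 0) else ∅)
          (if _h : 0 < b then (BB a (b-1) c).image (List.cons 1) else ∅) := by
        split_ifs <;> first
          | simp
          | exact disj_cons (by decide) _ _
      have hd2 : Disjoint
          ((if _h : 0 < a then (BB (a-1) b c).image (List.cons 0) else ∅) ∪
            (if _h : 0 < b then (BB a (b-1) c).image (List.cons 1) else ∅))
          (if _h : 0 < c then (BB a b (c-1)).image (List.cons 2) else ∅) := by
        rw [Finset.disjoint_union_left]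
        constructor <;> split_ifs <;> first
          | simp
          | exact disj_cons (by decide) _ _
      rw [Finset.card_union_of_disjoint hd2, Finset.card_union_of_disjoint hd1]
      congr 1
      congr 1
      · split_ifs with h
        · rw [Finset.card_image_of_injective _ (fun x y hxy => by simpa using hxy)]
          exact ih (a-1+b+c) (by omega) _ _ _ rfl
        · simp
      · split_ifs with h
        · rw [Finset.card_image_of_injective _ (fun x y hxy => by simpa using hxy)]
          exact ih (a+(b-1)+c) (by omega) _ _ _ rfl
        · simp
      · split_ifs with h
        · rw [Finset.card_image_of_injective _ (fun x y hxy => by simpa using hxy)]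
          exact ih (a+b+(c-1)) (by omega) _ _ _ rfl
        · simp
  · rw [if_neg hv, if_neg hv, Finset.card_empty]

end SYT3Aux
namespace SYT3Aux

def Ok (l : List (Fin 3)) : Prop :=
  ∀ t ∈ l.tails, t.count 2 ≤ t.count 1 ∧ t.count 1 ≤ t.count 0

lemma ok_self {l : List (Fin 3)} (h : Ok l) :
    l.count 2 ≤ l.count 1 ∧ l.count 1 ≤ l.count 0 :=
  h l (by simp [List.mem_tails])

lemma ok_tail {x : Fin 3} {t : List (Fin 3)} (h : Ok (x :: t)) : Ok t := by
  intro s hs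
  exact h s (by rw [List.mem_tails] at hs ⊢; exact hs.trans (List.suffix_cons x t))

lemma ok_cons {x : Fin 3} {t : List (Fin 3)} (h : Ok t)
    (h2 : (x::t).count 2 ≤ (x::t).count 1 ∧ (x::t).count 1 ≤ (x::t).count 0) :
    Ok (x :: t) := by
  intro s hs
  rw [List.tails_cons, List.mem_cons] at hs
  rcases hs with rfl | hs
  · exact h2
  · exact h s hs

lemma count_sum (l : List (Fin 3)) : l.count 0 + l.count 1 + l.count 2 = l.length := by
  induction l with
  | nil => simp
  | cons x t ih =>
    fin_cases x <;> simp [List.count_cons] <;> omega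

lemma mem_BB : ∀ N a b c, a + b + c = N → ∀ l : List (Fin 3),
    (l ∈ BB a b c ↔ l.count 0 = a ∧ l.count 1 = b ∧ l.count 2 = c ∧ Ok l) := by
  intro N
  induction N using Nat.strong_induction_on with
  | _ N ih =>
  intro a b c hN l
  rw [BB]
  by_cases hv : c ≤ b ∧ b ≤ a
  · rw [if_pos hv]
    by_cases haz : a = 0
    · have hb : b = 0 := by omega
      have hc : c = 0 := by omega
      subst haz hb hc
      rw [if_pos rfl, Finset.mem_singleton]
      constructor
      · rintro rfl
        refine ⟨rfl, rfl, rfl, ?_⟩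
        intro t ht
        simp only [List.mem_tails, List.suffix_nil] at ht
        subst ht; simp
      · rintro ⟨h0, h1, h2, -⟩
        have := count_sum l
        rw [h0, h1, h2] at this
        exact List.eq_nil_of_length_eq_zero this.symm
    · rw [if_neg haz]
      simp only [Finset.mem_union]
      constructor
      · rintro ((h | h) | h)
        · rw [dif_pos (Nat.pos_of_ne_zero haz)] at h
          simp only [Finset.mem_image] at h
          obtain ⟨t, ht, rfl⟩ := h
          obtain ⟨h0, h1, h2, hok⟩ :=
            (ih (a-1+b+c) (by omega) _ _ _ rfl t).1 ht
          refine ⟨by simp [List.count_cons, h0]; omega, by simp [List.count_cons, h1],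
            by simp [List.count_cons, h2], ?_⟩
          refine ok_cons hok ?_
          have := ok_self hok
          simp [List.count_cons]
          omega
        · by_cases hbz : 0 < b
          · rw [dif_pos hbz] at h
            simp only [Finset.mem_image] at h
            obtain ⟨t, ht, rfl⟩ := h
            obtain ⟨h0, h1, h2, hok⟩ :=
              (ih (a+(b-1)+c) (by omega) _ _ _ rfl t).1 ht
            have hok2 := ok_self hok
            have hv2 : c ≤ b-1 ∧ b-1 ≤ a := by
              constructor
              · -- from membership t ∈ BB a (b-1) c shape validity? derive from counts
                rw [← h1, ← h2]; exact hok2.1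
              · omega
            refine ⟨by simp [List.count_cons, h0], by simp [List.count_cons, h1]; omega,
              by simp [List.count_cons, h2], ?_⟩
            refine ok_cons hok ?_
            simp [List.count_cons]
            omega
          · rw [dif_neg hbz] at h; exact absurd h (Finset.notMem_empty _)
        · by_cases hcz : 0 < c
          · rw [dif_pos hcz] at h
            simp only [Finset.mem_image] at h
            obtain ⟨t, ht, rfl⟩ := h
            obtain ⟨h0, h1, h2, hok⟩ :=
              (ih (a+b+(c-1)) (by omega) _ _ _ rfl t).1 ht
            have hok2 := ok_self hok
            refine ⟨by simp [List.count_cons, h0], by simp [List.count_cons, h1],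
              by simp [List.count_cons, h2]; omega, ?_⟩
            refine ok_cons hok ?_
            simp [List.count_cons]
            omega
          · rw [dif_neg hcz] at h; exact absurd h (Finset.notMem_empty _)
      · rintro ⟨h0, h1, h2, hok⟩
        match l with
        | [] => exact absurd h0.symm haz
        | x :: t =>
          have hokt := ok_tail hok
          have hsum := ok_self hok
          fin_cases x
          · left; left
            rw [dif_pos (Nat.pos_of_ne_zero haz)]
            simp only [Finset.mem_image]
            refine ⟨t, ?_, rfl⟩
            rw [ih (a-1+b+c) (by omega) _ _ _ rfl t]
            simp [List.count_cons] at h0 h1 h2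
            exact ⟨by omega, h1, h2, hokt⟩
          · have hbz : 0 < b := by simp [List.count_cons] at h1; omega
            left; right
            rw [dif_pos hbz]
            simp only [Finset.mem_image]
            refine ⟨t, ?_, rfl⟩
            rw [ih (a+(b-1)+c) (by omega) _ _ _ rfl t]
            simp [List.count_cons] at h0 h1 h2
            exact ⟨h0, by omega, h2, hokt⟩
          · have hcz : 0 < c := by simp [List.count_cons] at h2; omega
            right
            rw [dif_pos hcz]
            simp only [Finset.mem_image]
            refine ⟨t, ?_, rfl⟩
            rw [ih (a+b+(c-1)) (by omega) _ _ _ rfl t]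
            simp [List.count_cons] at h0 h1 h2
            exact ⟨h0, h1, by omega, hokt⟩
  · rw [if_neg hv]
    simp only [Finset.notMem_empty, false_iff]
    rintro ⟨h0, h1, h2, hok⟩
    have := ok_self hok
    rw [h0, h1, h2] at this
    exact hv ⟨this.1, this.2⟩

end SYT3Aux
namespace SYT3Aux

variable {m : ℕ}

def pcnt (w : Fin m → Fin 3) (k : ℕ) (i : Fin 3) : ℕ :=
  (Finset.univ.filter fun t : Fin m => t.val < k ∧ w t = i).card

lemma pcnt_zero (w : Fin m → Fin 3) (i : Fin 3) : pcnt w 0 i = 0 := by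
  simp [pcnt]

lemma pcnt_succ (w : Fin m → Fin 3) {k : ℕ} (hk : k < m) (i : Fin 3) :
    pcnt w (k+1) i = pcnt w k i + (if w ⟨k, hk⟩ = i then 1 else 0) := by
  unfold pcnt
  have hsplit : (Finset.univ.filter fun t : Fin m => t.val < k+1 ∧ w t = i)
      = (Finset.univ.filter fun t : Fin m => t.val < k ∧ w t = i) ∪
        (Finset.univ.filter fun t : Fin m => t.val = k ∧ w t = i) := by
    rw [← Finset.filter_or]
    apply Finset.filter_congr
    intro t _
    constructor
    · rintro ⟨h1, h2⟩; rcases Nat.lt_succ_iff_lt_or_eq.1 h1 with h | h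
      · exact Or.inl ⟨h, h2⟩
      · exact Or.inr ⟨h, h2⟩
    · rintro (⟨h1, h2⟩ | ⟨h1, h2⟩) <;> exact ⟨by omega, h2⟩
  rw [hsplit, Finset.card_union_of_disjoint]
  · congr 1
    by_cases hw : w ⟨k, hk⟩ = i
    · rw [if_pos hw]
      rw [show (Finset.univ.filter fun t : Fin m => t.val = k ∧ w t = i) = {⟨k, hk⟩} from ?_]
      · simp
      · ext t
        simp only [Finset.mem_filter, Finset.mem_univ, true_and, Finset.mem_singleton]
        constructor
        · rintro ⟨h1, -⟩; exact Fin.ext h1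
        · rintro rfl; exact ⟨rfl, hw⟩
    · rw [if_neg hw]
      rw [show (Finset.univ.filter fun t : Fin m => t.val = k ∧ w t = i) = ∅ from ?_]
      · simp
      · ext t
        simp only [Finset.mem_filter, Finset.mem_univ, true_and, Finset.notMem_empty, iff_false]
        rintro ⟨h1, h2⟩
        exact hw (by rwa [show (⟨k, hk⟩ : Fin m) = t from Fin.ext h1.symm])
  · rw [Finset.disjoint_left]
    rintro t ht ht'
    simp only [Finset.mem_filter] at ht ht'
    omega

lemma pcnt_of_ge (w : Fin m → Fin 3) {k : ℕ} (hk : m ≤ k) (i : Fin 3) :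
    pcnt w k i = pcnt w m i := by
  unfold pcnt
  congr 1
  apply Finset.filter_congr
  intro t _
  have := t.isLt
  constructor <;> rintro ⟨-, h2⟩ <;> exact ⟨by omega, h2⟩

lemma take_count (w : Fin m → Fin 3) (k : ℕ) (i : Fin 3) :
    ((List.ofFn w).take k).count i = pcnt w k i := by
  induction k with
  | zero => simp [pcnt_zero]
  | succ k ih =>
    by_cases hk : k < m
    · rw [List.take_succ, List.getElem?_ofFn, dif_pos hk,
        List.count_append, ih, pcnt_succ w hk i]
      congr 1
      by_cases hw : w ⟨k, hk⟩ = i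
      · simp [hw]
      · simp only [if_neg hw]
        simp [List.count_cons, hw, Ne.symm hw]
    · have hm : m ≤ k := by omega
      rw [List.take_of_length_le (by simp; omega), pcnt_of_ge w (by omega) i,
        ← pcnt_of_ge w hm i, ← ih, List.take_of_length_le (by simp; omega)]

lemma count_ofFn (w : Fin m → Fin 3) (i : Fin 3) :
    (List.ofFn w).count i = pcnt w m i := by
  rw [← take_count w m i, List.take_of_length_le (by simp)]

lemma orderIso_val_lt {s : Finset (Fin m)} {cnt : ℕ} (h : s.card = cnt) (j : Fin cnt) (k : ℕ)
    (hcard : j.val < (s.filter fun t => t.val < k).card) :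
    ((s.orderIsoOfFin h j : Fin m) : ℕ) < k := by
  by_contra hge
  push_neg at hge
  have hsub : (s.filter fun t => t.val < k) ⊆
      (Finset.Iio j).image (fun j' => (s.orderEmbOfFin h j' : Fin m)) := by
    intro t ht
    simp only [Finset.mem_filter] at ht
    obtain ⟨hts, htk⟩ := ht
    have hrange : t ∈ Set.range (s.orderEmbOfFin h) := by
      rw [Finset.range_orderEmbOfFin]; exact hts
    obtain ⟨j', hj'⟩ := hrange
    simp only [Finset.mem_image, Finset.mem_Iio]
    refine ⟨j', ?_, hj'⟩
    by_contra hjj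
    push_neg at hjj
    have hle : (s.orderEmbOfFin h j : Fin m) ≤ s.orderEmbOfFin h j' :=
      (s.orderEmbOfFin h).monotone hjj
    rw [hj'] at hle
    rw [Fin.le_def] at hle
    have h2 : ((s.orderIsoOfFin h j : Fin m) : ℕ) ≤ t.val := by
      rw [Finset.coe_orderIsoOfFin_apply]; exact hle
    omega
  have := Finset.card_le_card hsub
  have himg : ((Finset.Iio j).image (fun j' => (s.orderEmbOfFin h j' : Fin m))).card
      = (Finset.Iio j).card :=
    Finset.card_image_of_injective _ (s.orderEmbOfFin h).injective
  rw [himg, Fin.card_Iio] at this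
  omega

lemma le_card_filter_orderIso {s : Finset (Fin m)} {cnt : ℕ} (h : s.card = cnt) (j : Fin cnt) :
    j.val + 1 ≤ (s.filter fun t => t.val < ((s.orderIsoOfFin h j : Fin m) : ℕ) + 1).card := by
  have hsub : (Finset.Iic j).image (fun j' => (s.orderEmbOfFin h j' : Fin m)) ⊆
      (s.filter fun t => t.val < ((s.orderIsoOfFin h j : Fin m) : ℕ) + 1) := by
    intro t ht
    simp only [Finset.mem_image, Finset.mem_Iic] at ht
    obtain ⟨j', hj'le, rfl⟩ := ht
    simp only [Finset.mem_filter]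
    refine ⟨Finset.orderEmbOfFin_mem s h j', ?_⟩
    have hle : (s.orderEmbOfFin h j' : Fin m) ≤ s.orderEmbOfFin h j :=
      (s.orderEmbOfFin h).monotone hj'le
    rw [Fin.le_def] at hle
    rw [Finset.coe_orderIsoOfFin_apply]
    omega
  have := Finset.card_le_card hsub
  rwa [Finset.card_image_of_injective _ (s.orderEmbOfFin h).injective, Fin.card_Iic] at this

end SYT3Aux
namespace SYT3Aux
open Finset

variable {n : ℕ}

lemma pcnt_filter {m : ℕ} (w : Fin m → Fin 3) (K : ℕ) (i : Fin 3) :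
    pcnt w K i = ((Finset.univ.filter fun t => w t = i).filter fun t => t.val < K).card := by
  rw [Finset.filter_filter]
  unfold pcnt
  congr 1
  apply Finset.filter_congr
  intro t _
  tauto

lemma pcnt_all {m : ℕ} (w : Fin m → Fin 3) (i : Fin 3) :
    pcnt w m i = (Finset.univ.filter fun t => w t = i).card := by
  unfold pcnt
  congr 1
  apply Finset.filter_congr
  intro t _
  have := t.isLt
  tauto

lemma hmono_of_ok {m : ℕ} {w : Fin m → Fin 3}
    (h : ∀ K, pcnt w K 2 ≤ pcnt w K 1 ∧ pcnt w K 1 ≤ pcnt w K 0) :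
    ∀ K (i i' : Fin 3), i < i' → pcnt w K i' ≤ pcnt w K i := by
  intro K i i' hii
  fin_cases i <;> fin_cases i' <;>
    first
      | exact absurd hii (by decide)
      | exact (h K).1
      | exact (h K).2
      | exact (h K).1.trans (h K).2

noncomputable def TofW (w : Fin (3*n) → Fin 3)
    (hc : ∀ i, (Finset.univ.filter fun t => w t = i).card = n) :
    Fin 3 → Fin n → Fin (3*n) :=
  fun i j => ((Finset.univ.filter fun t => w t = i).orderIsoOfFin (hc i) j : Fin (3*n))

lemma w_TofW (w : Fin (3*n) → Fin 3) (hc) (i : Fin 3) (j : Fin n) :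
    w (TofW w hc i j) = i := by
  have := ((Finset.univ.filter fun t => w t = i).orderIsoOfFin (hc i) j).2
  rw [Finset.mem_filter] at this
  exact this.2

lemma TofW_row (w : Fin (3*n) → Fin 3) (hc) (i : Fin 3) : StrictMono (TofW w hc i) := by
  intro j j' h
  exact Subtype.coe_lt_coe.2 (((Finset.univ.filter fun t => w t = i).orderIsoOfFin
    (hc i)).strictMono h)

lemma TofW_col (w : Fin (3*n) → Fin 3) (hc)
    (hmono : ∀ K (i i' : Fin 3), i < i' → pcnt w K i' ≤ pcnt w K i)
    {i i' : Fin 3} (hii : i < i') (j : Fin n) :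
    TofW w hc i j < TofW w hc i' j := by
  set x := TofW w hc i' j with hx
  have hub : j.val + 1 ≤ pcnt w (x.val + 1) i' := by
    rw [pcnt_filter]
    exact le_card_filter_orderIso (hc i') j
  have hlow : j.val + 1 ≤ pcnt w (x.val + 1) i := le_trans hub (hmono _ i i' hii)
  have hlt : ((TofW w hc i j : Fin (3*n)) : ℕ) < x.val + 1 := by
    apply orderIso_val_lt (hc i) j
    rw [← pcnt_filter]
    omega
  have hne : TofW w hc i j ≠ x := by
    intro hEq
    have h1 := w_TofW w hc i j
    have h2 := w_TofW w hc i' j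
    rw [hEq, hx] at h1
    rw [h1] at h2
    exact absurd h2 (ne_of_lt hii)
  have : (TofW w hc i j : Fin (3*n)) ≤ x := by
    rw [Fin.le_def]; omega
  exact lt_of_le_of_ne this hne

lemma TofW_SYT (w : Fin (3*n) → Fin 3) (hc)
    (hmono : ∀ K (i i' : Fin 3), i < i' → pcnt w K i' ≤ pcnt w K i) :
    IsSYT3 n (TofW w hc) := by
  refine ⟨fun i j k h => TofW_row w hc i h, fun j i k h => TofW_col w hc hmono h j, ?_, ?_⟩
  · rintro ⟨i, j⟩ ⟨i', j'⟩ h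
    simp only at h
    have hii : i = i' := by
      have h1 := w_TofW w hc i j
      have h2 := w_TofW w hc i' j'
      rw [h] at h1
      rw [h1] at h2
      exact h2.symm ▸ rfl
    subst hii
    have hj : j = j' := by
      have := (TofW_row w hc i).injective h
      exact this
    simp [hj]
  · intro t
    have ht : t ∈ Finset.univ.filter fun s => w s = w t := by
      simp
    refine ⟨⟨w t, ((Finset.univ.filter fun s => w s = w t).orderIsoOfFin (hc (w t))).symm
      ⟨t, ht⟩⟩, ?_⟩
    show ((Finset.univ.filter fun s => w s = w t).orderIsoOfFin (hc (w t))
      (((Finset.univ.filter fun s => w s = w t).orderIsoOfFin (hc (w t))).symm ⟨t, ht⟩) :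
        Fin (3*n)) = t
    rw [OrderIso.apply_symm_apply]

lemma TofW_unique (w : Fin (3*n) → Fin 3) (hc) (T : Fin 3 → Fin n → Fin (3*n))
    (hT : IsSYT3 n T) (hw : ∀ i j, w (T i j) = i) : TofW w hc = T := by
  funext i j
  have hmem : ∀ x : Fin n, T i x ∈ Finset.univ.filter fun t => w t = i := by
    intro x
    simp [hw i x]
  have hsm : StrictMono (T i) := fun a b hab => hT.1 i a b hab
  have := Finset.orderEmbOfFin_unique (hc i) hmem hsm
  calc TofW w hc i j
      = (Finset.univ.filter fun t => w t = i).orderEmbOfFin (hc i) j := by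
        rw [TofW, Finset.coe_orderIsoOfFin_apply]
    _ = T i j := by rw [← this]

end SYT3Aux
namespace SYT3Aux

variable {n : ℕ}

noncomputable def wOfT (T : Fin 3 → Fin n → Fin (3*n)) (hT : IsSYT3 n T) : Fin (3*n) → Fin 3 :=
  fun t => ((Equiv.ofBijective _ hT.2.2).symm t).1

lemma wOfT_apply (T : Fin 3 → Fin n → Fin (3*n)) (hT : IsSYT3 n T) (i : Fin 3) (j : Fin n) :
    wOfT T hT (T i j) = i := by
  unfold wOfT
  have h : (Equiv.ofBijective _ hT.2.2) (i, j) = T i j := rfl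
  rw [← h, Equiv.symm_apply_apply]

lemma pcnt_wOfT (T : Fin 3 → Fin n → Fin (3*n)) (hT : IsSYT3 n T) (K : ℕ) (i : Fin 3) :
    pcnt (wOfT T hT) K i = (Finset.univ.filter fun j : Fin n => (T i j).val < K).card := by
  unfold pcnt
  set e := Equiv.ofBijective _ hT.2.2 with he
  apply Finset.card_nbij' (i := fun t => (e.symm t).2) (j := fun j => T i j)
  · intro t ht
    simp only [Finset.mem_coe, Finset.mem_filter, Finset.mem_univ, true_and] at ht ⊢
    obtain ⟨htk, hti⟩ := ht
    have h1 : (e.symm t).1 = i := hti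
    have h2 : T i (e.symm t).2 = t := by
      conv_lhs => rw [← h1]
      exact e.apply_symm_apply t
    rw [h2]
    exact htk
  · intro j hj
    simp only [Finset.mem_coe, Finset.mem_filter, Finset.mem_univ, true_and] at hj ⊢
    exact ⟨hj, wOfT_apply T hT i j⟩
  · intro t ht
    simp only [Finset.mem_coe, Finset.mem_filter, Finset.mem_univ, true_and] at ht
    have h1 : (e.symm t).1 = i := ht.2
    conv_lhs => rw [← h1]
    exact e.apply_symm_apply t
  · intro j hj
    have : e.symm (T i j) = (i, j) := by
      have h : e (i, j) = T i j := rfl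
      rw [← h, Equiv.symm_apply_apply]
    show (e.symm (T i j)).2 = j
    rw [this]

lemma hc_wOfT (T : Fin 3 → Fin n → Fin (3*n)) (hT : IsSYT3 n T) :
    ∀ i, (Finset.univ.filter fun t => wOfT T hT t = i).card = n := by
  intro i
  rw [← pcnt_all, pcnt_wOfT]
  rw [Finset.filter_true_of_mem (fun j _ => (T i j).isLt), Finset.card_univ, Fintype.card_fin]

lemma hmono_wOfT (T : Fin 3 → Fin n → Fin (3*n)) (hT : IsSYT3 n T) :
    ∀ K (i i' : Fin 3), i < i' → pcnt (wOfT T hT) K i' ≤ pcnt (wOfT T hT) K i := by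
  intro K i i' h
  rw [pcnt_wOfT, pcnt_wOfT]
  apply Finset.card_le_card
  intro j hj
  simp only [Finset.mem_filter, Finset.mem_univ, true_and] at hj ⊢
  have := hT.2.1 j i i' h
  rw [Fin.lt_def] at this
  omega

def listOf (w : Fin (3*n) → Fin 3) : List (Fin 3) := (List.ofFn w).reverse

lemma count_listOf (w : Fin (3*n) → Fin 3) (i : Fin 3) :
    (listOf w).count i = pcnt w (3*n) i := by
  rw [listOf, List.count_reverse, count_ofFn]

lemma ok_listOf (w : Fin (3*n) → Fin 3)
    (hmono : ∀ K (i i' : Fin 3), i < i' → pcnt w K i' ≤ pcnt w K i) : Ok (listOf w) := by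
  intro s hs
  rw [List.mem_tails, List.suffix_iff_eq_drop] at hs
  rw [hs]
  have hcount : ∀ i : Fin 3,
      ((listOf w).drop ((listOf w).length - s.length)).count i
        = pcnt w ((List.ofFn w).length - ((listOf w).length - s.length)) i := by
    intro i
    rw [listOf, List.drop_reverse, List.count_reverse, take_count]
  refine ⟨?_, ?_⟩ <;> rw [hcount, hcount]
  · exact hmono _ 1 2 (by decide)
  · exact hmono _ 0 1 (by decide)

lemma listOf_mem (T : Fin 3 → Fin n → Fin (3*n)) (hT : IsSYT3 n T) :
    listOf (wOfT T hT) ∈ BB n n n := by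
  rw [mem_BB (n+n+n) n n n rfl]
  refine ⟨?_, ?_, ?_, ok_listOf _ (hmono_wOfT T hT)⟩ <;>
    rw [count_listOf, pcnt_all, hc_wOfT T hT]

def wOfL (l : List (Fin 3)) (hlen : l.length = 3*n) : Fin (3*n) → Fin 3 :=
  fun t => l.reverse.get (Fin.cast (by simp [hlen]) t)

lemma ofFn_wOfL (l : List (Fin 3)) (hlen : l.length = 3*n) :
    List.ofFn (wOfL l hlen) = l.reverse := by
  apply List.ext_getElem (by simp [hlen])
  intro k h1 h2
  simp only [List.getElem_ofFn, wOfL]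
  rfl

lemma listOf_wOfL (l : List (Fin 3)) (hlen : l.length = 3*n) :
    listOf (wOfL l hlen) = l := by
  rw [listOf, ofFn_wOfL, List.reverse_reverse]

lemma wOfL_listOf (w : Fin (3*n) → Fin 3) (hlen : (listOf w).length = 3*n) :
    wOfL (listOf w) hlen = w := by
  have h : List.ofFn (wOfL (listOf w) hlen) = List.ofFn w := by
    rw [ofFn_wOfL, listOf, List.reverse_reverse]
  exact List.ofFn_injective h

end SYT3Aux
namespace SYT3Aux

variable {n : ℕ}

lemma len_of_mem {l : List (Fin 3)} (hl : l ∈ BB n n n) : l.length = 3*n := by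
  obtain ⟨h0, h1, h2, -⟩ := (mem_BB (n+n+n) n n n rfl l).1 hl
  have := count_sum l
  omega

lemma pcnt_wOfL {l : List (Fin 3)} (hlen : l.length = 3*n) (K : ℕ) (i : Fin 3) :
    pcnt (wOfL l hlen) K i = (l.drop (l.length - K)).count i := by
  rw [← take_count, ofFn_wOfL]
  rw [← List.count_reverse (a := i) (l := l.reverse.take K), List.reverse_take, List.reverse_reverse,
    List.length_reverse]

lemma hc_of_mem {l : List (Fin 3)} (hl : l ∈ BB n n n) :
    ∀ i, (Finset.univ.filter fun t => wOfL l (len_of_mem hl) t = i).card = n := by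
  obtain ⟨h0, h1, h2, -⟩ := (mem_BB (n+n+n) n n n rfl l).1 hl
  intro i
  rw [← pcnt_all, pcnt_wOfL,
    show l.length - 3*n = 0 from by have := count_sum l; omega, List.drop_zero]
  fin_cases i
  · exact h0
  · exact h1
  · exact h2

lemma hok_of_mem {l : List (Fin 3)} (hl : l ∈ BB n n n) :
    ∀ K, pcnt (wOfL l (len_of_mem hl)) K 2 ≤ pcnt (wOfL l (len_of_mem hl)) K 1 ∧
      pcnt (wOfL l (len_of_mem hl)) K 1 ≤ pcnt (wOfL l (len_of_mem hl)) K 0 := by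
  obtain ⟨-, -, -, hok⟩ := (mem_BB (n+n+n) n n n rfl l).1 hl
  intro K
  rw [pcnt_wOfL, pcnt_wOfL, pcnt_wOfL]
  exact hok (l.drop (l.length - K)) (by rw [List.mem_tails]; exact List.drop_suffix _ _)

noncomputable def Fmap (x : {T : Fin 3 → Fin n → Fin (3*n) // IsSYT3 n T}) :
    {l : List (Fin 3) // l ∈ BB n n n} :=
  ⟨listOf (wOfT x.1 x.2), listOf_mem x.1 x.2⟩

noncomputable def Gmap (x : {l : List (Fin 3) // l ∈ BB n n n}) :
    {T : Fin 3 → Fin n → Fin (3*n) // IsSYT3 n T} :=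
  ⟨TofW (wOfL x.1 (len_of_mem x.2)) (hc_of_mem x.2),
   TofW_SYT _ _ (hmono_of_ok (hok_of_mem x.2))⟩

lemma GF (x : {T : Fin 3 → Fin n → Fin (3*n) // IsSYT3 n T}) : Gmap (Fmap x) = x := by
  obtain ⟨T, hT⟩ := x
  apply Subtype.ext
  exact TofW_unique (wOfL (listOf (wOfT T hT)) (len_of_mem (listOf_mem T hT)))
    (hc_of_mem (listOf_mem T hT)) T hT
    (fun i j => by rw [wOfL_listOf, wOfT_apply])

lemma FG (y : {l : List (Fin 3) // l ∈ BB n n n}) : Fmap (Gmap y) = y := by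
  obtain ⟨l, hl⟩ := y
  apply Subtype.ext
  have hw : wOfT (Gmap (⟨l, hl⟩ : {l : List (Fin 3) // l ∈ BB n n n})).1 (Gmap ⟨l, hl⟩).2
      = wOfL l (len_of_mem hl) := by
    funext t
    obtain ⟨p, hp⟩ := (Gmap (⟨l, hl⟩ : {l : List (Fin 3) // l ∈ BB n n n})).2.2.2.2 t
    have hp' : (Gmap (⟨l, hl⟩ : {l : List (Fin 3) // l ∈ BB n n n})).1 p.1 p.2 = t := hp
    rw [← hp']
    rw [wOfT_apply]
    exact (w_TofW (wOfL l (len_of_mem hl)) (hc_of_mem hl) p.1 p.2).symm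
  show listOf (wOfT (Gmap ⟨l, hl⟩).1 (Gmap ⟨l, hl⟩).2) = l
  rw [hw, listOf_wOfL]

end SYT3Aux


theorem card_SYT3 (n : ℕ) :
    Nat.card {T : Fin 3 → Fin n → Fin (3*n) // IsSYT3 n T} =
      2 * (3*n).factorial / (n.factorial * (n+1).factorial * (n+2).factorial) := by
  have e : {T : Fin 3 → Fin n → Fin (3*n) // IsSYT3 n T} ≃
      {l : List (Fin 3) // l ∈ SYT3Aux.BB n n n} :=
    ⟨SYT3Aux.Fmap, SYT3Aux.Gmap, SYT3Aux.GF, SYT3Aux.FG⟩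
  rw [Nat.card_congr e, Nat.card_eq_finsetCard, SYT3Aux.BB_card (n+n+n) n n n rfl,
    SYT3Aux.fc_eq_div]
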